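/- If ∑_{j≥0} (1/(p_j π_j)) ∑_{k=0}^j r_k π_k < ∞, then the sequence ((−1)^n Q_n(−1))_{n≥0} is bounded, i.e., lim_{n→∞} (−1)^n Q_n(−1) < ∞. -/

import Mathlib

open Finset Filter

theorem stmt9 (p q r : ℕ → ℝ) (Q : ℕ → ℝ → ℝ)
    (hp : ∀ j, 0 < p j) (hq : ∀ j, 0 < q (j + 1)) (hr : ∀ j, 0 ≤ r j)
    (hq0 : q 0 = 0) (hs : ∀ j, p j + q j + r j = 1)
    (hQ0 : ∀ x : ℝ, Q 0 x = 1) (hQ1 : ∀ x : ℝ, p 0 * Q 1 x = x - r 0)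
    (hQrec : ∀ n : ℕ, ∀ x : ℝ, x * Q (n + 1) x =
      q (n + 1) * Q n x + r (n + 1) * Q (n + 1) x + p (n + 1) * Q (n + 2) x)
    (π : ℕ → ℝ) (hπ0 : π 0 = 1) (hπ : ∀ n, π (n + 1) = π n * (p n / q (n + 1)))
    (hconv : Summable (fun j : ℕ => (1 / (p j * π j)) *
      ∑ k ∈ Finset.range (j + 1), r k * π k)) :
    ∃ C : ℝ, ∀ n : ℕ, (-1 : ℝ) ^ n * Q n (-1) ≤ C := by
  set u : ℕ → ℝ := fun n => (-1 : ℝ) ^ n * Q n (-1) with hu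
  have hQu : ∀ m, Q m (-1) = (-1 : ℝ) ^ m * u m := by
    intro m
    simp only [hu]
    rw [← mul_assoc, ← mul_pow]
    norm_num
  have hπpos : ∀ n, 0 < π n := by
    intro n
    induction n with
    | zero => rw [hπ0]; norm_num
    | succ n ih => rw [hπ]; exact mul_pos ih (div_pos (hp n) (hq n))
  have hu0 : u 0 = 1 := by simp [hu, hQ0]
  have hqπ : ∀ n, q (n + 1) * π (n + 1) = p n * π n := by
    intro n
    have hqne : q (n + 1) ≠ 0 := (hq n).ne'
    rw [hπ]
    field_simp
  have key : ∀ n, p n * π n * (u (n + 1) - u n)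
      = 2 * ∑ k ∈ Finset.range (n + 1), r k * π k * u k := by
    intro n
    induction n with
    | zero =>
      have h1 := hQ1 (-1)
      rw [hQu 1] at h1
      rw [Finset.sum_range_one, hπ0, hu0]
      linear_combination -h1 - hs 0 + hq0
    | succ n ih =>
      have h := hQrec n (-1)
      rw [hQu n, hQu (n + 1), hQu (n + 2)] at h
      have hne : ((-1 : ℝ) ^ n) ≠ 0 := pow_ne_zero _ (by norm_num)
      have e : u (n + 1) + r (n + 1) * u (n + 1)
          = q (n + 1) * u n + p (n + 1) * u (n + 2) :=
        mul_left_cancel₀ hne (by linear_combination h)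
      rw [Finset.sum_range_succ]
      linear_combination ih - π (n + 1) * e - π (n + 1) * u (n + 1) * hs (n + 1)
        + (u (n + 1) - u n) * hqπ n
  have hnn : ∀ n, ∀ k ≤ n, 0 ≤ u k := by
    intro n
    induction n with
    | zero => intro k hk; interval_cases k; rw [hu0]; norm_num
    | succ n ih =>
      intro k hk
      rcases Nat.lt_succ_iff_lt_or_eq.mp (Nat.lt_succ_of_le hk) with h' | h'
      · exact ih k (Nat.lt_succ_iff.mp h')
      · subst h'
        have hsum : 0 ≤ ∑ j ∈ Finset.range (n + 1), r j * π j * u j :=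
          Finset.sum_nonneg fun j hj =>
            mul_nonneg (mul_nonneg (hr j) (hπpos j).le)
              (ih j (Nat.lt_succ_iff.mp (Finset.mem_range.mp hj)))
        have hd : 0 ≤ u (n + 1) - u n := by
          have hpp : 0 < p n * π n := mul_pos (hp n) (hπpos n)
          nlinarith [key n]
        have := ih n le_rfl
        linarith
  have hnn' : ∀ k, 0 ≤ u k := fun k => hnn k k le_rfl
  have hmono : Monotone u := by
    apply monotone_nat_of_le_succ
    intro n
    have hsum : 0 ≤ ∑ j ∈ Finset.range (n + 1), r j * π j * u j :=
      Finset.sum_nonneg fun j _ =>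
        mul_nonneg (mul_nonneg (hr j) (hπpos j).le) (hnn' j)
    have hpp : 0 < p n * π n := mul_pos (hp n) (hπpos n)
    nlinarith [key n]
  set s : ℕ → ℝ := fun j => (1 / (p j * π j)) * ∑ k ∈ Finset.range (j + 1), r k * π k
    with hsdef
  have hsnn : ∀ j, 0 ≤ s j := by
    intro j
    apply mul_nonneg
    · have h1 := hp j
      have h2 := hπpos j
      positivity
    · exact Finset.sum_nonneg fun k _ => mul_nonneg (hr k) (hπpos k).le
  have hstep : ∀ n, u (n + 1) ≤ u n * (1 + 2 * s n) := by
    intro n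
    have hpp : 0 < p n * π n := mul_pos (hp n) (hπpos n)
    have hb : ∑ k ∈ Finset.range (n + 1), r k * π k * u k
        ≤ u n * ∑ k ∈ Finset.range (n + 1), r k * π k := by
      rw [Finset.mul_sum]
      apply Finset.sum_le_sum
      intro k hk
      have hk' : k ≤ n := Nat.lt_succ_iff.mp (Finset.mem_range.mp hk)
      have := hmono hk'
      nlinarith [mul_nonneg (hr k) (hπpos k).le]
    have hk := key n
    have hs' : s n = (1 / (p n * π n)) * ∑ k ∈ Finset.range (n + 1), r k * π k := rfl
    rw [hs']
    rw [div_mul_eq_mul_div, one_mul, ← sub_nonneg]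
    have : u n * (1 + 2 * ((∑ k ∈ Finset.range (n + 1), r k * π k) / (p n * π n)))
        - u (n + 1)
        = (2 * (u n * ∑ k ∈ Finset.range (n + 1), r k * π k
            - ∑ k ∈ Finset.range (n + 1), r k * π k * u k)) / (p n * π n) := by
      rw [eq_div_iff hpp.ne']
      have hdc := div_mul_cancel₀ (∑ k ∈ Finset.range (n + 1), r k * π k) hpp.ne'
      linear_combination 2 * u n * hdc - hk
    rw [this]
    apply div_nonneg _ hpp.le
    linarith
  have hbound : ∀ n, u n ≤ Real.exp (2 * ∑ j ∈ Finset.range n, s j) := by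
    intro n
    induction n with
    | zero => simp [hu0]
    | succ n ih =>
      have h1 : u (n + 1) ≤ u n * (1 + 2 * s n) := hstep n
      have h2 : (1 + 2 * s n : ℝ) ≤ Real.exp (2 * s n) := by
        have := Real.add_one_le_exp (2 * s n)
        linarith
      have h3 : u n * (1 + 2 * s n) ≤ Real.exp (2 * ∑ j ∈ Finset.range n, s j)
          * Real.exp (2 * s n) := by
        apply mul_le_mul ih h2 (by nlinarith [hsnn n]) (Real.exp_nonneg _)
      rw [Finset.sum_range_succ]
      calc u (n + 1) ≤ u n * (1 + 2 * s n) := h1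
        _ ≤ _ := h3
        _ = Real.exp (2 * (∑ j ∈ Finset.range n, s j + s n)) := by
            rw [← Real.exp_add]; congr 1; ring
  refine ⟨Real.exp (2 * ∑' j, s j), fun n => ?_⟩
  have h4 : ∑ j ∈ Finset.range n, s j ≤ ∑' j, s j :=
    Summable.sum_le_tsum (Finset.range n) (fun i _ => hsnn i) hconv
  calc u n ≤ Real.exp (2 * ∑ j ∈ Finset.range n, s j) := hbound n
    _ ≤ Real.exp (2 * ∑' j, s j) := by
        apply Real.exp_le_exp.mpr; linarith
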